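/- For every n ≥ 3, the (n-2)×(n-2) Hankel matrix S_n with entries (S_n)_{ij} = 1/((i+j)!) for 1 ≤ i, j ≤ n-2 (i.e., entries 1/2!, 1/3!, ..., 1/(2n-4)! arranged so the (i,j) entry is 1/(i+j)!) is invertible. -/
import Mathlib

open Polynomial Finset

lemma fact_add_prod (a k : ℕ) :
    (a + k).factorial = a.factorial * ∏ t ∈ Finset.range k, (a + 1 + t) := by
  induction k with
  | zero => simp
  | succ k ih =>
    rw [Finset.prod_range_succ, ← mul_assoc, ← ih, ← Nat.add_assoc, Nat.factorial_succ]
    ring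

lemma aux_det_ne_zero (m : ℕ) :
    (Matrix.of (fun i j : Fin m =>
      (1 : ℝ) / (Nat.factorial ((i : ℕ) + 1 + ((j : ℕ) + 1))))).det ≠ 0 := by
  classical
  set A : Matrix (Fin m) (Fin m) ℝ := Matrix.of (fun i j : Fin m =>
      (1 : ℝ) / (Nat.factorial ((i : ℕ) + 1 + ((j : ℕ) + 1)))) with hA
  -- the polynomials
  set p : Fin m → ℝ[X] := fun j =>
    ∏ t ∈ Finset.range (j : ℕ), (X + Polynomial.C ((m + 2 - (j : ℕ) + t : ℕ) : ℝ)) with hp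
  have hmonic : ∀ j : Fin m, (p j).Monic := by
    intro j
    exact monic_prod_of_monic _ _ fun t _ => monic_X_add_C _
  have hdeg : ∀ j : Fin m, (p j).natDegree = (j : ℕ) := by
    intro j
    rw [hp]
    rw [Polynomial.natDegree_prod _ _ (fun t _ => (monic_X_add_C _).ne_zero)]
    simp only [Polynomial.natDegree_X_add_C]
    simp
  set M : Matrix (Fin m) (Fin m) ℝ :=
    Matrix.of (fun i j : Fin m => (p j).eval ((i : ℕ) : ℝ)) with hM
  have hMdet : M.det ≠ 0 := by
    rw [← Matrix.det_eval_matrixOfPolynomials_eq_det_vandermonde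
      (fun i : Fin m => ((i : ℕ) : ℝ)) p hdeg hmonic]
    rw [Matrix.det_vandermonde_ne_zero_iff]
    intro i j hij
    exact Fin.ext (Nat.cast_injective hij)
  -- the diagonal matrix
  set d : Fin m → ℝ := fun i => ((i : ℕ) + m + 1).factorial with hd
  have hdne : ∀ i, d i ≠ 0 := fun i => by
    positivity
  have key : Matrix.diagonal d * A = M.submatrix id (Fin.revPerm) := by
    ext i j
    rw [Matrix.diagonal_mul]
    have hj : (j : ℕ) < m := j.isLt
    have hrev : ((Fin.revPerm j : Fin m) : ℕ) = m - 1 - (j : ℕ) := by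
      simp [Fin.revPerm, Fin.rev]
      omega
    -- compute the RHS
    have hRHS : (M.submatrix id Fin.revPerm) i j =
        ∏ t ∈ Finset.range (m - 1 - (j : ℕ)), (((i : ℕ) + (j : ℕ) + 3 + t : ℕ) : ℝ) := by
      simp only [Matrix.submatrix_apply, id_eq, hM, Matrix.of_apply, hp, Polynomial.eval_prod]
      rw [hrev]
      apply Finset.prod_congr rfl
      intro t _
      have h1 : m + 2 - (m - 1 - (j : ℕ)) = (j : ℕ) + 3 := by omega
      rw [h1]
      simp only [Polynomial.eval_add, Polynomial.eval_X, Polynomial.eval_C]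
      push_cast
      ring
    rw [hRHS]
    -- compute the LHS
    have hfact : ((i : ℕ) + m + 1).factorial =
        ((i : ℕ) + (j : ℕ) + 2).factorial *
          ∏ t ∈ Finset.range (m - 1 - (j : ℕ)), ((i : ℕ) + (j : ℕ) + 2 + 1 + t) := by
      have := fact_add_prod ((i : ℕ) + (j : ℕ) + 2) (m - 1 - (j : ℕ))
      have he : (i : ℕ) + (j : ℕ) + 2 + (m - 1 - (j : ℕ)) = (i : ℕ) + m + 1 := by omega
      rw [he] at this
      exact this
    have hfne : ((((i : ℕ) + (j : ℕ) + 2).factorial : ℝ)) ≠ 0 := by positivity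
    have hidx : (i : ℕ) + 1 + ((j : ℕ) + 1) = (i : ℕ) + (j : ℕ) + 2 := by omega
    rw [hA]
    simp only [Matrix.of_apply, hd, hidx]
    rw [hfact]
    push_cast
    field_simp
    apply Finset.prod_congr rfl
    intro t _
    push_cast
    ring
  have hperm : (M.submatrix id (Fin.revPerm : Equiv.Perm (Fin m))).det ≠ 0 := by
    rw [Matrix.det_permute']
    refine mul_ne_zero ?_ hMdet
    simp
  have hdiag : (Matrix.diagonal d).det ≠ 0 := by
    rw [Matrix.det_diagonal]
    exact Finset.prod_ne_zero_iff.mpr fun i _ => hdne i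
  intro hAdet
  apply hperm
  rw [← key, Matrix.det_mul, hAdet, mul_zero]

/-- The `(n-2) × (n-2)` Hankel matrix with `(i,j)` entry `1/(i+j)!`
(1-based indices `i, j = 1, …, n-2`, so entries range over `1/2!, …, 1/(2n-4)!`)
is invertible for every `n ≥ 3`. -/
theorem stmt_1 (n : ℕ) (hn : 3 ≤ n) :
    IsUnit (Matrix.of (fun i j : Fin (n - 2) =>
      (1 : ℝ) / (Nat.factorial ((i : ℕ) + 1 + ((j : ℕ) + 1))))) := by
  rw [Matrix.isUnit_iff_isUnit_det, isUnit_iff_ne_zero]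
  exact aux_det_ne_zero (n - 2)
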